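/- Suppose 2 ≤ k < m, m/(k-1) ≥ 2, and n ≤ 2^{⌊m/(k-1)⌋ - 1} - 1. Then g(n,m) ≥ k·n. -/

import Mathlib

open Finset

/-- `f` assigns each component (indexed by `ι`) to one of `n` classes so that the
components in each class are pairwise disjoint with union `[m]`: every `x ∈ [m]`
lies in exactly one component of each class. -/
def IsResolution {ι : Type*} {m n : ℕ} (C : ι → Finset (Fin m)) (f : ι → Fin n) : Prop :=
  ∀ (i : Fin n) (x : Fin m), ∃! j : ι, f j = i ∧ x ∈ C j

/-- The multiset of nonempty subsets of `[m]` given by `C` is uniquely resolvable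
into `n` classes: a resolution exists and is unique up to renaming the classes. -/
def UniquelyResolvable {ι : Type*} {m : ℕ} (n : ℕ) (C : ι → Finset (Fin m)) : Prop :=
  (∀ j, (C j).Nonempty) ∧ ∃ f : ι → Fin n, IsResolution C f ∧
    ∀ f' : ι → Fin n, IsResolution C f' → ∃ σ : Equiv.Perm (Fin n), f' = σ ∘ f

/-- `g n m` : maximum size of a multiset of nonempty subsets of `[m]` that is
uniquely resolvable into `n` classes. -/
noncomputable def g (n m : ℕ) : ℕ :=
  sSup {k | ∃ C : Fin k → Finset (Fin m), UniquelyResolvable n C}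

/-- `P k m` : the largest `N` such that there is a multiset of nonempty subsets of `[m]`
uniquely resolvable into `N` classes in which every class has size exactly `k`. -/
noncomputable def P (k m : ℕ) : ℕ :=
  sSup {N | ∃ C : Fin N × Fin k → Finset (Fin m),
    UniquelyResolvable N C ∧ IsResolution C Prod.fst}

/-- The binary entropy function. -/
noncomputable def H2 (x : ℝ) : ℝ := -x * Real.logb 2 x - (1 - x) * Real.logb 2 (1 - x)

def slotN (a b w x : ℕ) : ℕ :=
  if min (x / a) b < b ∧ w.testBit (min (x / a) b) then a
  else min (x - min (x / a) b * a) a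

lemma slotN_le (a b w x : ℕ) : slotN a b w x ≤ a := by
  unfold slotN; split
  · exact le_rfl
  · exact min_le_right _ _

lemma slotN_last (a b w j : ℕ) (ha : 0 < a) (hj : j < a) :
    slotN a b w (a * b + j) = j := by
  have hdiv : (a * b + j) / a = b := by
    rw [Nat.mul_add_div ha, Nat.div_eq_of_lt hj]
    omega
  unfold slotN
  rw [hdiv, min_self]
  rw [if_neg (by simp)]
  have : a * b + j - b * a = j := by rw [Nat.mul_comm b a]; omega
  rw [this, min_eq_left hj.le]

lemma slotN_block (a b w s j : ℕ) (ha : 0 < a) (hs : s < b) (hj : j < a) :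
    slotN a b w (a * s + j) = if w.testBit s then a else j := by
  have hdiv : (a * s + j) / a = s := by
    rw [Nat.mul_add_div ha, Nat.div_eq_of_lt hj]
    omega
  unfold slotN
  rw [hdiv, min_eq_left hs.le]
  by_cases h : w.testBit s
  · rw [if_pos ⟨hs, h⟩, if_pos h]
  · rw [if_neg (by tauto), if_neg h]
    have : a * s + j - s * a = j := by rw [Nat.mul_comm s a]; omega
    rw [this, min_eq_left hj.le]

lemma exists_bit (w b : ℕ) (h0 : w ≠ 0) (hlt : w < 2 ^ b) :
    ∃ s, s < b ∧ w.testBit s := by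
  by_contra h
  push_neg at h
  apply h0
  apply Nat.eq_of_testBit_eq
  intro s
  rw [Nat.zero_testBit]
  by_cases hs : s < b
  · exact Bool.eq_false_iff.mpr (fun hb => (h s hs hb).elim)
  · exact Nat.testBit_eq_false_of_lt
      (lt_of_lt_of_le hlt (Nat.pow_le_pow_right (by norm_num) (not_lt.mp hs)))

lemma class_eq {b u v : ℕ} (hu : u < 2 ^ b) (hv : v < 2 ^ b)
    (h : ∀ s, s < b → u.testBit s = v.testBit s) : u = v := by
  apply Nat.eq_of_testBit_eq
  intro s
  by_cases hs : s < b
  · exact h s hs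
  · have h2 : (2:ℕ) ^ b ≤ 2 ^ s := Nat.pow_le_pow_right (by norm_num) (not_lt.mp hs)
    rw [Nat.testBit_eq_false_of_lt (lt_of_lt_of_le hu h2),
      Nat.testBit_eq_false_of_lt (lt_of_lt_of_le hv h2)]

def comp (a b m n : ℕ) (p : Fin n × Fin (a + 1)) : Finset (Fin m) :=
  Finset.univ.filter (fun x => slotN a b (p.1.1 + 1) x.1 = p.2.1)

lemma mem_comp {a b m n : ℕ} (p : Fin n × Fin (a + 1)) (x : Fin m) :
    x ∈ comp a b m n p ↔ slotN a b (p.1.1 + 1) x.1 = p.2.1 := by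
  simp [comp]

lemma res_fst (a b m n : ℕ) : IsResolution (comp a b m n) Prod.fst := by
  intro i x
  refine ⟨(i, ⟨slotN a b (i.1 + 1) x.1, Nat.lt_succ_of_le (slotN_le a b _ _)⟩),
    ⟨rfl, by rw [mem_comp]⟩, ?_⟩
  rintro ⟨i', j'⟩ ⟨h1, h2⟩
  rw [mem_comp] at h2
  simp only at h1
  subst h1
  exact Prod.ext rfl (Fin.ext h2.symm)

lemma mainUR (a b m n : ℕ) (ha : 0 < a) (hab : (b + 1) * a ≤ m)
    (hn : ∀ i : Fin n, (i : ℕ) + 1 < 2 ^ b) :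
    UniquelyResolvable n (comp a b m n) := by
  have hXlt : ∀ j : ℕ, j < a → a * b + j < m := by
    intro j hj; calc a * b + j < a * (b + 1) := by nlinarith
      _ = (b + 1) * a := by ring
      _ ≤ m := hab
  have hYlt : ∀ s j : ℕ, s < b → j < a → a * s + j < m := by
    intro s j hs hj
    calc a * s + j < a * (s + 1) := by nlinarith
      _ ≤ a * (b + 1) := by nlinarith
      _ = (b + 1) * a := by ring
      _ ≤ m := hab
  constructor
  · -- nonempty
    rintro ⟨i, j⟩
    by_cases hj : (j : ℕ) < a
    · exact ⟨⟨a * b + j, hXlt _ hj⟩, (mem_comp _ _).2 (slotN_last a b _ _ ha hj)⟩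
    · have hj' : (j : ℕ) = a := le_antisymm (Nat.lt_succ_iff.1 j.2) (not_lt.mp hj)
      obtain ⟨s, hs, hts⟩ := exists_bit _ b (Nat.succ_ne_zero _) (hn i)
      refine ⟨⟨a * s + 0, hYlt s 0 hs ha⟩, (mem_comp _ _).2 ?_⟩
      rw [slotN_block a b _ s 0 ha hs ha, if_pos hts, hj']
  · refine ⟨Prod.fst, res_fst a b m n, ?_⟩
    intro f' hf'
    set zeroJ : Fin (a + 1) := ⟨0, Nat.succ_pos a⟩ with hzeroJ
    set lastJ : Fin (a + 1) := ⟨a, Nat.lt_succ_self a⟩ with hlastJ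
    have injA : ∀ j : Fin (a + 1), (j : ℕ) < a →
        Function.Injective (fun i : Fin n => f' (i, j)) := by
      intro j hj i i' h
      simp only at h
      set x : Fin m := ⟨a * b + j, hXlt _ hj⟩ with hx
      have hxmem : ∀ i'' : Fin n, x ∈ comp a b m n (i'', j) := by
        intro i''; exact (mem_comp _ _).2 (slotN_last a b _ _ ha hj)
      obtain ⟨p, -, hu⟩ := hf' (f' (i, j)) x
      have h1 := hu (i, j) ⟨rfl, hxmem i⟩
      have h2 := hu (i', j) ⟨h.symm, hxmem i'⟩
      have := h1.trans h2.symm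
      exact congrArg Prod.fst this
    have surjA : ∀ j : Fin (a + 1), (j : ℕ) < a →
        Function.Surjective (fun i : Fin n => f' (i, j)) :=
      fun j hj => Finite.injective_iff_surjective.1 (injA j hj)
    have surjB : Function.Surjective (fun i : Fin n => f' (i, lastJ)) := by
      intro gq
      obtain ⟨i0, hi0⟩ := surjA zeroJ ha gq
      simp only at hi0
      obtain ⟨s, hsb, hts⟩ := exists_bit _ b (Nat.succ_ne_zero _) (hn i0)
      set y : Fin m := ⟨a * s + 0, hYlt s 0 hsb ha⟩ with hy
      obtain ⟨p, ⟨hpg, hpm⟩, -⟩ := hf' gq y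
      rw [mem_comp] at hpm
      rw [show (y : ℕ) = a * s + 0 from rfl, slotN_block a b _ s 0 ha hsb ha] at hpm
      by_cases hbit : Nat.testBit (p.1.1 + 1) s
      · rw [if_pos hbit] at hpm
        have hp2 : p.2 = lastJ := Fin.ext hpm.symm
        refine ⟨p.1, ?_⟩
        simp only
        rw [← hp2, Prod.mk.eta]; exact hpg
      · rw [if_neg hbit] at hpm
        have hp2 : p.2 = zeroJ := Fin.ext hpm.symm
        have h3 : f' (p.1, zeroJ) = gq := by rw [← hp2, Prod.mk.eta]; exact hpg
        have hp1 : p.1 = i0 := injA zeroJ ha (h3.trans hi0.symm)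
        rw [hp1] at hbit
        exact absurd hts hbit
    have injB : Function.Injective (fun i : Fin n => f' (i, lastJ)) :=
      Finite.injective_iff_surjective.2 surjB
    have key : ∀ (gq : Fin n) (c : Fin n), f' (c, lastJ) = gq →
        ∀ (i' : Fin n) (j' : Fin (a + 1)), (j' : ℕ) < a → f' (i', j') = gq → i' = c := by
      intro gq c hc i' j' hj' hi'
      have hbits : ∀ s, s < b → Nat.testBit (i'.1 + 1) s = Nat.testBit (c.1 + 1) s := by
        intro s hsb
        set y : Fin m := ⟨a * s + (j' : ℕ), hYlt s _ hsb hj'⟩ with hy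
        have hyslot : ∀ w, slotN a b w y.1 = if Nat.testBit w s then a else (j' : ℕ) :=
          fun w => slotN_block a b w s _ ha hsb hj'
        obtain ⟨p, ⟨hpg, hpm⟩, hu⟩ := hf' gq y
        by_cases h1 : Nat.testBit (i'.1 + 1) s
        · rw [mem_comp, hyslot] at hpm
          by_cases hb2 : Nat.testBit (p.1.1 + 1) s
          · rw [if_pos hb2] at hpm
            have hp2 : p.2 = lastJ := Fin.ext hpm.symm
            have h3 : f' (p.1, lastJ) = gq := by rw [← hp2, Prod.mk.eta]; exact hpg
            have h4 : p.1 = c := injB (h3.trans hc.symm)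
            rw [h1, ← h4, hb2]
          · rw [if_neg hb2] at hpm
            have hp2 : p.2 = j' := Fin.ext hpm.symm
            have h3 : f' (p.1, j') = gq := by rw [← hp2, Prod.mk.eta]; exact hpg
            have h4 : p.1 = i' := injA j' hj' (h3.trans hi'.symm)
            rw [h4] at hb2
            exact absurd h1 hb2
        · by_cases h2 : Nat.testBit (c.1 + 1) s
          · have m1 : y ∈ comp a b m n (c, lastJ) :=
              (mem_comp _ _).2 (by rw [hyslot, if_pos h2])
            have m2 : y ∈ comp a b m n (i', j') :=
              (mem_comp _ _).2 (by rw [hyslot, if_neg h1])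
            have e1 := hu (c, lastJ) ⟨hc, m1⟩
            have e2 := hu (i', j') ⟨hi', m2⟩
            have e3 : lastJ = j' := congrArg Prod.snd (e1.trans e2.symm)
            have := congrArg Fin.val e3
            simp only [hlastJ] at this
            omega
          · rw [Bool.eq_false_iff.mpr h1, Bool.eq_false_iff.mpr h2]
      have : i'.1 + 1 = c.1 + 1 := class_eq (hn i') (hn c) hbits
      exact Fin.ext (by omega)
    have bij0 : Function.Bijective (fun i : Fin n => f' (i, zeroJ)) :=
      ⟨injA zeroJ ha, surjA zeroJ ha⟩
    refine ⟨Equiv.ofBijective _ bij0, ?_⟩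
    funext p
    obtain ⟨i, j⟩ := p
    show f' (i, j) = f' (i, zeroJ)
    obtain ⟨c, hc⟩ := surjB (f' (i, zeroJ))
    simp only at hc
    have hic : i = c := key _ c hc i zeroJ ha rfl
    by_cases hj : (j : ℕ) < a
    · obtain ⟨i2, hi2⟩ := surjA j hj (f' (i, zeroJ))
      simp only at hi2
      have h5 : i2 = c := key _ c hc i2 j hj hi2
      have h6 : f' (i, j) = f' (i2, j) := congrArg (fun z => f' (z, j)) (hic.trans h5.symm)
      exact h6.trans hi2
    · have hj' : j = lastJ :=
        Fin.ext (le_antisymm (Nat.lt_succ_iff.1 j.2) (not_lt.mp hj))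
      have h6 : f' (i, lastJ) = f' (c, lastJ) := congrArg (fun z => f' (z, lastJ)) hic
      rw [hj']; exact h6.trans hc

lemma isRes_equiv {ι ι' : Type*} {m n : ℕ} (e : ι' ≃ ι) {C : ι → Finset (Fin m)}
    {f : ι → Fin n} (h : IsResolution C f) : IsResolution (C ∘ e) (f ∘ e) := by
  intro i x
  obtain ⟨j, hj, hu⟩ := h i x
  refine ⟨e.symm j, by simpa using hj, ?_⟩
  intro j' hj'
  have := hu (e j') hj'
  exact e.symm_apply_apply j' ▸ congrArg e.symm this

lemma UR_equiv {ι ι' : Type*} {m n : ℕ} (e : ι' ≃ ι) (C : ι → Finset (Fin m))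
    (h : UniquelyResolvable n C) : UniquelyResolvable n (C ∘ e) := by
  obtain ⟨hne, f, hf, hu⟩ := h
  refine ⟨fun j => hne (e j), f ∘ e, isRes_equiv e hf, ?_⟩
  intro f'' hf''
  have h2 : IsResolution C (f'' ∘ e.symm) := by
    have h3 := isRes_equiv e.symm hf''
    have h4 : (C ∘ e) ∘ e.symm = C := by funext x; simp
    rwa [h4] at h3
  obtain ⟨σ, hσ⟩ := hu _ h2
  refine ⟨σ, ?_⟩
  funext j
  have := congrFun hσ (e j)
  simpa using this

lemma bddA (n m : ℕ) :
    BddAbove {k | ∃ C : Fin k → Finset (Fin m), UniquelyResolvable n C} := by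
  refine ⟨n * m, ?_⟩
  rintro N ⟨C, hne, f, hf, -⟩
  have hinj : Function.Injective (fun j : Fin N => (f j, (C j).min' (hne j))) := by
    intro j j' h
    have h1 : f j = f j' := congrArg Prod.fst h
    have h2 : (C j).min' (hne j) = (C j').min' (hne j') := congrArg Prod.snd h
    obtain ⟨j0, -, hu⟩ := hf (f j) ((C j).min' (hne j))
    have e1 := hu j ⟨rfl, (C j).min'_mem _⟩
    have e2 := hu j' ⟨h1.symm, h2 ▸ (C j').min'_mem _⟩
    exact e1.trans e2.symm
  have := Fintype.card_le_of_injective _ hinj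
  simpa using this

/-- If `2 ≤ k < m`, `⌊m/(k-1)⌋ ≥ 2` and `n ≤ 2 ^ (⌊m/(k-1)⌋ - 1) - 1`, then
`g n m ≥ k * n`. -/
theorem stmt8 (m k n : ℕ) (hk : 2 ≤ k) (hkm : k < m) (h2 : 2 ≤ m / (k - 1))
    (hn : n ≤ 2 ^ (m / (k - 1) - 1) - 1) :
    k * n ≤ g n m := by
  set t := m / (k - 1) with ht
  set a := k - 1 with hadef
  set b := t - 1 with hbdef
  have ha : 0 < a := by omega
  have hk1 : k = a + 1 := by omega
  have hb1 : t = b + 1 := by omega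
  have hmab : (b + 1) * a ≤ m := by
    rw [← hb1]
    calc t * a = m / a * a := by rw [ht, hadef]
      _ ≤ m := Nat.div_mul_le_self m a
  have hni : ∀ i : Fin n, (i : ℕ) + 1 < 2 ^ b := by
    intro i
    have h1 : (i : ℕ) < n := i.2
    have h2 : (0:ℕ) < 2 ^ b := by positivity
    omega
  have hUR := mainUR a b m n ha hmab hni
  have hmul : k * n = n * (a + 1) := by rw [hk1]; ring
  have e : Fin (k * n) ≃ Fin n × Fin (a + 1) :=
    (finCongr hmul).trans finProdFinEquiv.symm
  apply le_csSup (bddA n m)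
  exact ⟨(comp a b m n) ∘ e, UR_equiv e _ hUR⟩
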